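/- The set of locally adjointable endomorphisms of a Hilbert C*-module M forms a Banach subalgebra of the Banach algebra End_A(M) of all bounded A-linear endomorphisms of M; in particular, the composition of two locally adjointable endomorphisms is locally adjointable. -/

import Mathlib

open scoped RightActions
open Filter

/-- `S` is an adjoint of `T` with respect to the `A`-valued inner products:
`⟪T x, y⟫ = ⟪x, S y⟫` for all `x, y`. -/
def IsAdjointPair (A : Type*) {E F : Type*} [Inner A E] [Inner A F]
    (T : E → F) (S : F → E) : Prop :=
  ∀ (x : E) (y : F), (inner A (T x) y : A) = inner A x (S y)

/-- `T` is adjointable: it possesses an adjoint. -/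
def HasAdjoint (A : Type*) {E F : Type*} [Inner A E] [Inner A F] (T : E → F) : Prop :=
  ∃ S : F → E, IsAdjointPair A T S

/-- `T` is `A`-linear: it commutes with the right `A`-action. -/
def IsALinear (A : Type*) {E F : Type*} [SMul Aᵐᵒᵖ E] [SMul Aᵐᵒᵖ F] (T : E → F) : Prop :=
  ∀ (x : E) (a : A), T (x <• a) = T x <• a

/-- The Hilbert C*-module class as it stood in Mathlib of December 2024: a right `A`-module
(`SMul Aᵐᵒᵖ E`) with inner product `A`-linear on the right, `⟪x, y <• a⟫ = ⟪x, y⟫ * a`. -/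
class RightCStarModule (A E : Type*) [NonUnitalSemiring A] [StarRing A]
    [Module ℂ A] [AddCommGroup E] [Module ℂ E] [PartialOrder A] [SMul Aᵐᵒᵖ E] [Norm A] [Norm E]
    extends Inner A E where
  inner_add_right {x} {y} {z} : inner x (y + z) = inner x y + inner x z
  inner_self_nonneg {x} : 0 ≤ inner x x
  inner_self {x} : inner x x = 0 ↔ x = 0
  inner_op_smul_right {a : A} {x y : E} : inner x (y <• a) = inner x y * a
  inner_smul_right_complex {z : ℂ} {x} {y} : inner x (z • y) = z • inner x y
  star_inner x y : star (inner x y) = inner y x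
  norm_eq_sqrt_norm_inner_self x : ‖x‖ = √‖inner x x‖

/-- The inner product of `A` as a (right) C*-module over itself, as in Mathlib of
December 2024: `⟪x, y⟫ = star x * y`. -/
def RightCStarModule.innerSelf (A : Type*) [NonUnitalCStarAlgebra A] : Inner A A :=
  ⟨fun x y => star x * y⟩

/-- A bounded operator `T : M → N` of Hilbert C*-modules is *locally adjointable* if
`T ∘ γ` is adjointable for every adjointable (`A`-linear bounded) `γ : A → M`. -/
def LocallyAdjointable (A : Type*) [NonUnitalCStarAlgebra A] [PartialOrder A]
    [StarOrderedRing A] {M N : Type*}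
    [NormedAddCommGroup M] [NormedSpace ℂ M] [SMul Aᵐᵒᵖ M] [RightCStarModule A M]
    [Inner A N] (T : M → N) : Prop :=
  ∀ γ : A →L[ℂ] M, IsALinear A ⇑γ → @HasAdjoint A A M (RightCStarModule.innerSelf A) _ ⇑γ →
    @HasAdjoint A A N (RightCStarModule.innerSelf A) _ (T ∘ ⇑γ)

variable {A : Type*} [NonUnitalCStarAlgebra A] [PartialOrder A] [StarOrderedRing A]
variable {K N : Type*}
  [NormedAddCommGroup K] [NormedSpace ℂ K] [SMul Aᵐᵒᵖ K] [RightCStarModule A K]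
  [NormedAddCommGroup N] [NormedSpace ℂ N] [SMul Aᵐᵒᵖ N] [RightCStarModule A N]

lemma rcm_innerSelf_def (x y : A) :
    @inner A A (RightCStarModule.innerSelf A) x y = star x * y := rfl

lemma rcm_inner_add_left {x y z : K} : inner A (x + y) z = inner A x z + inner A y z := by
  rw [← RightCStarModule.star_inner z (x + y), RightCStarModule.inner_add_right, star_add,
    RightCStarModule.star_inner, RightCStarModule.star_inner]

lemma rcm_inner_neg_right {x y : K} : inner A x (-y) = -inner A x y := by
  have h := RightCStarModule.inner_smul_right_complex (A := A) (z := (-1 : ℂ)) (x := x) (y := y)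
  rwa [neg_one_smul, neg_one_smul] at h

lemma rcm_inner_sub_right {x y z : K} : inner A x (y - z) = inner A x y - inner A x z := by
  rw [sub_eq_add_neg, RightCStarModule.inner_add_right, rcm_inner_neg_right, ← sub_eq_add_neg]

lemma rcm_inner_sub_left {x y z : K} : inner A (x - y) z = inner A x z - inner A y z := by
  rw [← RightCStarModule.star_inner z (x - y), rcm_inner_sub_right, star_sub,
    RightCStarModule.star_inner, RightCStarModule.star_inner]

lemma rcm_inner_smul_left_complex {c : ℂ} {x y : K} :
    inner A (c • x) y = star c • inner A x y := by
  rw [← RightCStarModule.star_inner y (c • x), RightCStarModule.inner_smul_right_complex,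
    star_smul, RightCStarModule.star_inner]

lemma rcm_inner_op_smul_left {a : A} {x y : K} : inner A (x <• a) y = star a * inner A x y := by
  rw [← RightCStarModule.star_inner y (x <• a), RightCStarModule.inner_op_smul_right,
    star_mul, RightCStarModule.star_inner]

lemma rcm_inner_zero_right {x : K} : inner A x (0 : K) = 0 := by
  have h := RightCStarModule.inner_smul_right_complex (A := A) (z := (0 : ℂ)) (x := x) (y := 0)
  rwa [zero_smul, zero_smul] at h

lemma rcm_swap_mul_le (x y : K) :
    inner A y x * inner A x y ≤ (‖x‖ ^ 2 : ℝ) • inner A y y := by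
  rcases eq_or_ne x 0 with h | h
  · subst h
    rw [rcm_inner_zero_right, zero_mul, norm_zero]; simp
  have hx : 0 < ‖x‖ := norm_pos_iff.mpr h
  set r : ℝ := ‖x‖ ^ 2 with hr
  set a : A := inner A x y with ha
  have hsa : star a = inner A y x := RightCStarModule.star_inner x y
  have hxx : ‖(inner A x x : A)‖ = r := by
    rw [hr, RightCStarModule.norm_eq_sqrt_norm_inner_self (A := A) x, Real.sq_sqrt (norm_nonneg _)]
  have h0 : (0 : A) ≤ inner A (x <• a - (r : ℂ) • y) (x <• a - (r : ℂ) • y) :=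
    RightCStarModule.inner_self_nonneg
  have hexp : inner A (x <• a - (r : ℂ) • y) (x <• a - (r : ℂ) • y)
      = star a * inner A x x * a - r • (star a * a) - r • (star a * a)
        + r • (r • inner A y y) := by
    simp only [rcm_inner_sub_left, rcm_inner_sub_right,
      RightCStarModule.inner_op_smul_right, rcm_inner_op_smul_left,
      RightCStarModule.inner_smul_right_complex, rcm_inner_smul_left_complex]
    simp only [Complex.star_def, Complex.conj_ofReal, Complex.coe_smul, ← ha, ← hsa]
    simp only [sub_mul, smul_mul_assoc, smul_sub]
    abel
  have hle : star a * inner A x x * a ≤ r • (star a * a) := by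
    rw [← hxx]
    exact CStarAlgebra.star_left_conjugate_le_norm_smul (RightCStarModule.star_inner x x)
  rw [hexp] at h0
  have h1 : r • (star a * a) ≤ r • (r • inner A y y) := by
    have := add_le_add hle (le_refl (- r • (star a * a) - r • (star a * a) + r • (r • inner A y y)))
    have h2 : (0:A) ≤ r • (star a * a) + (-r • (star a * a) - r • (star a * a)
        + r • (r • inner A y y)) := by
      refine h0.trans (le_of_eq_of_le ?_ this)
      rw [neg_smul]; abel
    have h3 : r • (star a * a) + (-r • (star a * a) - r • (star a * a)
        + r • (r • inner A y y)) = r • (r • inner A y y) - r • (star a * a) := by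
      rw [neg_smul]; abel
    rw [h3] at h2
    exact sub_nonneg.mp h2
  rw [← hsa]
  exact (smul_le_smul_iff_of_pos_left (by positivity)).mp h1

lemma rcm_norm_inner_le (x y : K) : ‖(inner A x y : A)‖ ≤ ‖x‖ * ‖y‖ := by
  have hsa : star (inner A x y : A) = inner A y x := RightCStarModule.star_inner x y
  have := calc ‖(inner A x y : A)‖ ^ 2 = ‖inner A y x * inner A x y‖ := by
                rw [← hsa, CStarRing.norm_star_mul_self, pow_two]
    _ ≤ ‖(‖x‖ ^ 2 : ℝ) • (inner A y y : A)‖ := by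
                refine CStarAlgebra.norm_le_norm_of_nonneg_of_le ?_ (rcm_swap_mul_le x y)
                rw [← hsa]
                exact star_mul_self_nonneg _
    _ = ‖x‖ ^ 2 * ‖(inner A y y : A)‖ := by simp [norm_smul]
    _ = ‖x‖ ^ 2 * ‖y‖ ^ 2 := by
                rw [RightCStarModule.norm_eq_sqrt_norm_inner_self (A := A) y,
                  Real.sq_sqrt (norm_nonneg _)]
    _ = (‖x‖ * ‖y‖) ^ 2 := by rw [mul_pow]
  exact (pow_le_pow_iff_left₀ (norm_nonneg _) (by positivity) (by simp)).mp this

/-- The continuous linear map `w ↦ ⟪z, w⟫`. -/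
noncomputable def rcmInnerR (z : K) : K →L[ℂ] A :=
  LinearMap.mkContinuous
    { toFun := fun w => inner A z w
      map_add' := fun _ _ => RightCStarModule.inner_add_right
      map_smul' := fun _ _ => RightCStarModule.inner_smul_right_complex } ‖z‖
    (fun w => rcm_norm_inner_le z w)

/-- Two elements of a Hilbert C*-module agreeing against all inner products are equal. -/
lemma locAdj_ext_inner_right {x y : K} (h : ∀ z : K, (inner A z x : A) = inner A z y) : x = y := by
  have h2 : (inner A (x - y) (x - y) : A) = 0 := by
    rw [rcm_inner_sub_right, h (x - y), sub_self]
  exact sub_eq_zero.mp (RightCStarModule.inner_self.mp h2)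

open Topology in
/-- The locally adjointable endomorphisms of a Hilbert C*-module `K` form a Banach
subalgebra of `End_A(K)`: they are closed under sum, scalar multiple and composition,
and form a norm-closed set; in particular, the composition of two locally adjointable
endomorphisms is locally adjointable. -/
theorem locallyAdjointable_banach_subalgebra :
    (∀ F G : K →L[ℂ] K, IsALinear A ⇑F → IsALinear A ⇑G →
      LocallyAdjointable A ⇑F → LocallyAdjointable A ⇑G → LocallyAdjointable A ⇑(F + G)) ∧
    (∀ (c : ℂ) (F : K →L[ℂ] K), IsALinear A ⇑F →
      LocallyAdjointable A ⇑F → LocallyAdjointable A ⇑(c • F)) ∧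
    IsClosed {F : K →L[ℂ] K | IsALinear A ⇑F ∧ LocallyAdjointable A ⇑F} ∧
    (∀ F G : K →L[ℂ] K, IsALinear A ⇑F → IsALinear A ⇑G →
      LocallyAdjointable A ⇑F → LocallyAdjointable A ⇑G →
      LocallyAdjointable A ⇑(F.comp G)) := by
  refine ⟨?_, ?_, ?_, ?_⟩
  · -- sums
    intro F G _ _ hF' hG' γ hγlin hγadj
    obtain ⟨S₁, hS₁⟩ := hF' γ hγlin hγadj
    obtain ⟨S₂, hS₂⟩ := hG' γ hγlin hγadj
    refine ⟨fun y => S₁ y + S₂ y, fun x y => ?_⟩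
    have h1 := hS₁ x y
    have h2 := hS₂ x y
    simp only [Function.comp_apply] at h1 h2 ⊢
    rw [ContinuousLinearMap.add_apply, rcm_inner_add_left, h1, h2,
      rcm_innerSelf_def, rcm_innerSelf_def, rcm_innerSelf_def, mul_add]
  · -- scalar multiples
    intro c F _ hF' γ hγlin hγadj
    obtain ⟨S, hS⟩ := hF' γ hγlin hγadj
    refine ⟨fun y => (starRingEnd ℂ c) • S y, fun x y => ?_⟩
    have h1 := hS x y
    simp only [Function.comp_apply] at h1 ⊢
    rw [ContinuousLinearMap.smul_apply, rcm_inner_smul_left_complex, h1,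
      rcm_innerSelf_def, rcm_innerSelf_def, mul_smul_comm]
    rfl
  · -- closedness
    refine IsSeqClosed.isClosed ?_
    intro u F hu hlim
    have hpt : ∀ v : K, Tendsto (fun n => u n v) atTop (𝓝 (F v)) := fun v =>
      ((ContinuousLinearMap.apply ℂ K v).continuous.tendsto F).comp hlim
    constructor
    · -- A-linearity passes to the limit
      intro x a
      refine locAdj_ext_inner_right (A := A) fun z => ?_
      have t1 : Tendsto (fun n => (inner A z ((u n) (x <• a)) : A)) atTop
          (𝓝 (inner A z (F (x <• a)))) :=
        (((rcmInnerR (A := A) z).continuous.tendsto _).comp (hpt (x <• a)))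
      have t2 : Tendsto (fun n => (inner A z ((u n) (x <• a)) : A)) atTop
          (𝓝 (inner A z (F x <• a))) := by
        have e : ∀ n, (inner A z ((u n) (x <• a)) : A) = inner A z ((u n) x) * a := fun n => by
          rw [(hu n).1 x a, RightCStarModule.inner_op_smul_right]
        rw [show (inner A z (F x <• a) : A) = inner A z (F x) * a from
          RightCStarModule.inner_op_smul_right]
        refine Tendsto.congr (fun n => (e n).symm) ?_
        exact (((rcmInnerR (A := A) z).continuous.tendsto _).comp (hpt x)).mul_const a
      exact tendsto_nhds_unique t1 t2
    · -- local adjointability passes to the limit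
      intro γ hγlin hγadj
      choose S hS using fun n => (hu n).2 γ hγlin hγadj
      have key : ∀ n m (y : K), ‖S n y - S m y‖ ≤ ‖u n - u m‖ * ‖γ‖ * ‖y‖ := by
        intro n m y
        set d := S n y - S m y with hd
        have h1 := hS n d y
        have h2 := hS m d y
        simp only [Function.comp_apply] at h1 h2
        have hdd : star d * d = inner A ((u n) (γ d) - (u m) (γ d)) y := by
          rw [rcm_inner_sub_left, h1, h2, rcm_innerSelf_def,
            rcm_innerSelf_def, ← mul_sub, ← hd]
        have hsq : ‖d‖ * ‖d‖ ≤ (‖u n - u m‖ * ‖γ‖ * ‖y‖) * ‖d‖ := by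
          calc ‖d‖ * ‖d‖ = ‖star d * d‖ := (CStarRing.norm_star_mul_self).symm
            _ = ‖(inner A ((u n) (γ d) - (u m) (γ d)) y : A)‖ := by rw [hdd]
            _ ≤ ‖(u n) (γ d) - (u m) (γ d)‖ * ‖y‖ := rcm_norm_inner_le _ _
            _ = ‖(u n - u m) (γ d)‖ * ‖y‖ := by simp [ContinuousLinearMap.sub_apply]
            _ ≤ (‖u n - u m‖ * ‖γ d‖) * ‖y‖ := by
                gcongr; exact (u n - u m).le_opNorm _
            _ ≤ (‖u n - u m‖ * (‖γ‖ * ‖d‖)) * ‖y‖ := by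
                gcongr; exact γ.le_opNorm _
            _ = (‖u n - u m‖ * ‖γ‖ * ‖y‖) * ‖d‖ := by ring
        rcases eq_or_lt_of_le (norm_nonneg d) with h0 | h0
        · rw [← h0]; positivity
        · exact le_of_mul_le_mul_right (by simpa [mul_comm] using hsq) h0
      have hcauchy : ∀ y : K, CauchySeq fun n => S n y := by
        intro y
        rw [Metric.cauchySeq_iff]
        intro ε hε
        have hCu : CauchySeq u := hlim.cauchySeq
        rw [Metric.cauchySeq_iff] at hCu
        have hpos : (0 : ℝ) < ‖γ‖ * ‖y‖ + 1 := by positivity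
        obtain ⟨N, hN⟩ := hCu (ε / (‖γ‖ * ‖y‖ + 1)) (by positivity)
        refine ⟨N, fun m hm n hn => ?_⟩
        have h1 := key m n y
        have h2 := hN m hm n hn
        rw [dist_eq_norm] at h2 ⊢
        calc ‖S m y - S n y‖ ≤ ‖u m - u n‖ * ‖γ‖ * ‖y‖ := h1
          _ ≤ ‖u m - u n‖ * (‖γ‖ * ‖y‖ + 1) := by
              rw [mul_assoc]; gcongr; linarith
          _ < (ε / (‖γ‖ * ‖y‖ + 1)) * (‖γ‖ * ‖y‖ + 1) :=
              mul_lt_mul_of_pos_right h2 hpos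
          _ = ε := div_mul_cancel₀ ε hpos.ne'
      have hlimS : ∀ y : K, ∃ l : A, Tendsto (fun n => S n y) atTop (𝓝 l) := fun y =>
        cauchySeq_tendsto_of_complete (hcauchy y)
      choose T hT using hlimS
      refine ⟨T, fun x y => ?_⟩
      have t1 : Tendsto (fun n => (inner A ((u n) (γ x)) y : A)) atTop
          (𝓝 (inner A (F (γ x)) y)) := by
        have hc : Continuous fun w : K => (inner A w y : A) := by
          have := continuous_star.comp (rcmInnerR (A := A) y).continuous
          simpa only [Function.comp_def, rcmInnerR, LinearMap.mkContinuous_apply, LinearMap.coe_mk,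
            AddHom.coe_mk, RightCStarModule.star_inner] using this
        exact (hc.tendsto _).comp (hpt (γ x))
      have t2 : Tendsto (fun n => (inner A ((u n) (γ x)) y : A)) atTop
          (𝓝 (@inner A A (RightCStarModule.innerSelf A) x (T y))) := by
        have e : ∀ n, (inner A ((u n) (γ x)) y : A) = star x * S n y := fun n => by
          have h := hS n x y
          simp only [Function.comp_apply] at h
          rw [h, rcm_innerSelf_def]
        rw [show (@inner A A (RightCStarModule.innerSelf A) x (T y) : A) = star x * T y from
          rcm_innerSelf_def x (T y)]
        exact Tendsto.congr (fun n => (e n).symm) ((hT y).const_mul (star x))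
      simpa using tendsto_nhds_unique t1 t2
  · -- composition
    intro F G _ hG hF' hG' γ hγlin hγadj
    have hlin : IsALinear A ⇑(G.comp γ) := fun x a => by
      simp only [ContinuousLinearMap.coe_comp', Function.comp_apply, hγlin x a, hG (γ x) a]
    have hadj : @HasAdjoint A A K (RightCStarModule.innerSelf A) _ ⇑(G.comp γ) := by
      exact hG' γ hγlin hγadj
    have := hF' (G.comp γ) hlin hadj
    exact this
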